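/- arXiv:1408.2554 — 7 statements merged into one kernel-verified Lean document; each statement's English description precedes it below -/
import Mathlib

section
/- If Γ is a relational structure whose automorphism group is 2-transitive (i.e., acts transitively on ordered pairs of distinct elements) and Γ has an endomorphism that is not injective, then Γ has a constant endomorphism (obtained in the closure of the monoid generated by the non-injective endomorphism together with the automorphisms). -/
/-- If a relational structure Γ (endomorphism monoid `E`, automorphisms `A`) has a
2-transitive automorphism group and a non-injective endomorphism, then it has a
constant endomorphism. -/
theorem stmt0 {D : Type*} (E A : Set (D → D))
    (hAE : A ⊆ E)
    (hAbij : ∀ g ∈ A, Function.Bijective g)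
    (h2trans : ∀ a b c d : D, a ≠ b → c ≠ d → ∃ g ∈ A, g a = c ∧ g b = d)
    (hid : id ∈ E)
    (hcomp : ∀ f ∈ E, ∀ g ∈ E, (f ∘ g) ∈ E)
    (hclosed : ∀ f : D → D, (∀ F : Finset D, ∃ g ∈ E, ∀ x ∈ F, g x = f x) → f ∈ E)
    (hnoninj : ∃ e ∈ E, ¬ Function.Injective e) :
    ∃ e ∈ E, ∃ d : D, ∀ x : D, e x = d := by
  obtain ⟨e, heE, he⟩ := hnoninj
  simp only [Function.Injective, not_forall] at he
  obtain ⟨a, b, heq, hab⟩ := he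
  -- every finite set can be collapsed to a single value
  have key : ∀ F : Finset D, ∃ g ∈ E, ∀ x ∈ F, g x = a := by
    intro F
    -- first collapse to some value
    have collapse : ∃ g ∈ E, ∃ v, ∀ x ∈ F, g x = v := by
      classical
      induction F using Finset.induction_on with
      | empty => exact ⟨id, hid, a, by simp⟩
      | @insert x F hx ih =>
        obtain ⟨g, hgE, v, hv⟩ := ih
        by_cases hgx : g x = v
        · exact ⟨g, hgE, v, by
            intro y hy
            rcases Finset.mem_insert.mp hy with rfl | hy
            · exact hgx
            · exact hv y hy⟩
        · obtain ⟨α, hαA, hα1, hα2⟩ := h2trans v (g x) a b (Ne.symm hgx) hab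
          refine ⟨e ∘ α ∘ g, hcomp _ heE _ (hcomp _ (hAE hαA) _ hgE), e a, ?_⟩
          intro y hy
          rcases Finset.mem_insert.mp hy with rfl | hy
          · simp [Function.comp, hα2, heq]
          · simp [Function.comp, hv y hy, hα1]
    obtain ⟨g, hgE, v, hv⟩ := collapse
    by_cases hva : v = a
    · exact ⟨g, hgE, fun x hx => hva ▸ hv x hx⟩
    · have : ∃ w, w ≠ v := by
        by_cases h : v = b
        · exact ⟨a, fun h' => hva h'.symm⟩
        · exact ⟨b, fun h' => h h'.symm⟩
      obtain ⟨w, hw⟩ := this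
      obtain ⟨α, hαA, hα1, hα2⟩ := h2trans v w a b (Ne.symm hw) hab
      exact ⟨α ∘ g, hcomp _ (hAE hαA) _ hgE, fun x hx => by
        simp [Function.comp, hv x hx, hα1]⟩
  refine ⟨fun _ => a, hclosed _ ?_, a, fun _ => rfl⟩
  intro F
  obtain ⟨g, hgE, hg⟩ := key F
  exact ⟨g, hgE, hg⟩
end

section
/- Let X ⊆ 𝕃, c ∈ X, and let f : 𝕃 → 𝕃 preserve the quaternary relation Q on every 4-element subset of X containing c. Then f preserves Q on all of X. -/
/-- The cone `S^c_a` of `a` at `c`: the class of `a` under E_c(x,y) ⟺ xy|c.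
`Cr z x y` denotes C(z;x,y), i.e. xy|z. -/
def cone {L : Type*} (Cr : L → L → L → Prop) (c a : L) : Set L := {x | Cr c x a}

/-- `P|Q`: the sets `P` and `Q` split from each other: every pair from one splits off
from every point of the other. -/
def splitsSet {L : Type*} (Cr : L → L → L → Prop) (P Q : Set L) : Prop :=
  (∀ p₁ ∈ P, ∀ p₂ ∈ P, ∀ q ∈ Q, Cr q p₁ p₂) ∧ (∀ q₁ ∈ Q, ∀ q₂ ∈ Q, ∀ p ∈ P, Cr p q₁ q₂)

/-- The derived quartet relation `ab:cd`: {a,b} splits from {c,d}, including the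
degenerate cases of equalities. -/
def Qrel {L : Type*} (Cr : L → L → L → Prop) (a b c d : L) : Prop :=
  (Cr c a b ∧ Cr d a b) ∨ (Cr a c d ∧ Cr b c d) ∨
  (a = b ∧ a ≠ c ∧ a ≠ d) ∨ (c = d ∧ c ≠ a ∧ c ≠ b)

/-- `f` preserves `Q` on `X`. -/
def QPreservesOn {L : Type*} (Cr : L → L → L → Prop) (f : L → L) (X : Set L) : Prop :=
  ∀ a ∈ X, ∀ b ∈ X, ∀ u ∈ X, ∀ v ∈ X,
    Qrel Cr a b u v → Qrel Cr (f a) (f b) (f u) (f v)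

/-- Common cone conditions (1)–(3) of Definition of the behaviors at a constant `c`:
(1) f(c)|f(A∩S^c_a); (2) f preserves C on each A∩S^c_a; (3) distinct cones have
splitting images. -/
def ConeConds {L : Type*} (Cr : L → L → L → Prop) (f : L → L) (c : L) (A : Set L) : Prop :=
  (∀ a ∈ A, ∀ x ∈ A ∩ cone Cr c a, ∀ y ∈ A ∩ cone Cr c a, Cr (f c) (f x) (f y)) ∧
  (∀ a ∈ A, ∀ x ∈ A ∩ cone Cr c a, ∀ y ∈ A ∩ cone Cr c a, ∀ z ∈ A ∩ cone Cr c a,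
    Cr z x y → Cr (f z) (f x) (f y)) ∧
  (∀ a ∈ A, ∀ b ∈ A, cone Cr c a = cone Cr c b ∨
    splitsSet Cr (f '' (A ∩ cone Cr c a)) (f '' (A ∩ cone Cr c b)))

/-- `f` behaves as `cut_c` on `A`: cone conditions and, for x,y,z ∈ A with x|yzc and
y|zc: f(x)f(y)f(z)|f(c) and f(x)|f(y)f(z). -/
def CutOn {L : Type*} (Cr : L → L → L → Prop) (f : L → L) (c : L) (A : Set L) : Prop :=
  ConeConds Cr f c A ∧
  ∀ x ∈ A, ∀ y ∈ A, ∀ z ∈ A,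
    (Cr x y z ∧ Cr x y c ∧ Cr x z c ∧ Cr y z c) →
    (Cr (f c) (f x) (f y) ∧ Cr (f c) (f x) (f z) ∧ Cr (f c) (f y) (f z) ∧
      Cr (f x) (f y) (f z))

/-- `f` behaves as `rer_c` on `A`: cone conditions and, for x,y,z ∈ A with x|yzc and
y|zc: f(x)f(y)f(z)|f(c) and f(x)f(y)|f(z). -/
def RerOn {L : Type*} (Cr : L → L → L → Prop) (f : L → L) (c : L) (A : Set L) : Prop :=
  ConeConds Cr f c A ∧
  ∀ x ∈ A, ∀ y ∈ A, ∀ z ∈ A,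
    (Cr x y z ∧ Cr x y c ∧ Cr x z c ∧ Cr y z c) →
    (Cr (f c) (f x) (f y) ∧ Cr (f c) (f x) (f z) ∧ Cr (f c) (f y) (f z) ∧
      Cr (f z) (f x) (f y))

/-- `f` behaves as `tilde-rer_c` on `A`: cone conditions and, for x,y ∈ A with x|yc:
f(y)|f(x)f(c). -/
def TildeRerOn {L : Type*} (Cr : L → L → L → Prop) (f : L → L) (c : L) (A : Set L) : Prop :=
  ConeConds Cr f c A ∧ ∀ x ∈ A, ∀ y ∈ A, Cr x y c → Cr (f y) (f x) (f c)

/-- The automorphisms of (𝕃;C), as self-maps of 𝕃. -/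
def AutC {L : Type*} (Cr : L → L → L → Prop) : Set (Function.End L) :=
  {α | Function.Bijective α ∧ ∀ z x y : L, Cr z x y ↔ Cr (α z) (α x) (α y)}

/-- `A` is `c`-universal: every finite `U` with a marked point `u` can be mapped by an
automorphism of (𝕃;C) into `A ∪ {c}` with `u ↦ c`. -/
def cUniversal {L : Type*} (Cr : L → L → L → Prop) (c : L) (A : Set L) : Prop :=
  ∀ U : Finset L, ∀ u ∈ U, ∃ α ∈ AutC Cr, α u = c ∧ ∀ x ∈ U, α x ∈ A ∪ {c}


section QAux

variable {L : Type*} {Cr : L → L → L → Prop}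

/-- From `Cr z x y` the point `z` is distinct from `x` and `y`. -/
lemma qaux_ne (hsym : ∀ z x y : L, Cr z x y → Cr z y x)
    (hC2 : ∀ z x y : L, Cr z x y → ¬ Cr y x z)
    (hC4 : ∀ z x : L, x ≠ z → Cr z x x)
    {z x y : L} (h : Cr z x y) : z ≠ x ∧ z ≠ y := by
  have key : ∀ a b c : L, Cr a b c → a ≠ b := by
    intro a b c hh e
    subst e
    by_cases hac : a = c
    · subst hac; exact hC2 _ _ _ hh hh
    · exact hC2 _ _ _ hh (hC4 _ _ hac)
  exact ⟨key _ _ _ h, key _ _ _ (hsym _ _ _ h)⟩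

lemma qaux_F3 (hsym : ∀ z x y : L, Cr z x y → Cr z y x)
    (hC2 : ∀ z x y : L, Cr z x y → ¬ Cr y x z)
    (hC3 : ∀ z x y w : L, Cr z x y → (Cr z w y ∨ Cr w x y))
    {z x y w : L} (h1 : Cr z x y) (h2 : Cr y x w) : Cr z x w := by
  rcases hC3 y x w z h2 with h | h
  · rcases hC3 z x y w h1 with h' | h'
    · exact absurd (hsym _ _ _ h) (hC2 _ _ _ h')
    · exact absurd h2 (hC2 _ _ _ h')
  · exact h

lemma qaux_F4 (hsym : ∀ z x y : L, Cr z x y → Cr z y x)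
    (hC2 : ∀ z x y : L, Cr z x y → ¬ Cr y x z)
    (htrans : ∀ z x y w : L, Cr z x y → Cr z y w → Cr z x w)
    (hC3 : ∀ z x y w : L, Cr z x y → (Cr z w y ∨ Cr w x y))
    {z x y w : L} (h1 : Cr z x y) (h2 : Cr y x w) : Cr z y w :=
  htrans z y x w (hsym _ _ _ h1) (qaux_F3 hsym hC2 hC3 h1 h2)

lemma qaux_qne (hsym : ∀ z x y : L, Cr z x y → Cr z y x)
    (hC2 : ∀ z x y : L, Cr z x y → ¬ Cr y x z)
    (hC4 : ∀ z x : L, x ≠ z → Cr z x x)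
    {p q r : L} (h : Qrel Cr p p q r) : p ≠ q := by
  rcases h with ⟨h1, _⟩ | ⟨h1, _⟩ | ⟨_, h1, _⟩ | ⟨_, h1, _⟩
  · exact (qaux_ne hsym hC2 hC4 h1).1.symm
  · exact (qaux_ne hsym hC2 hC4 h1).1
  · exact h1
  · exact h1.symm

lemma qaux_swap {a b u v : L} (h : Qrel Cr a b u v) : Qrel Cr u v a b := by
  rcases h with h | h | h | h
  · exact Or.inr (Or.inl h)
  · exact Or.inl h
  · exact Or.inr (Or.inr (Or.inr h))
  · exact Or.inr (Or.inr (Or.inl h))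

/-- Merging lemma: if `xc:uv` and `yc:uv` then `xy:uv`. -/
lemma qaux_M (hsym : ∀ z x y : L, Cr z x y → Cr z y x)
    (hC2 : ∀ z x y : L, Cr z x y → ¬ Cr y x z)
    (htrans : ∀ z x y w : L, Cr z x y → Cr z y w → Cr z x w)
    (hC3 : ∀ z x y w : L, Cr z x y → (Cr z w y ∨ Cr w x y))
    (hC4 : ∀ z x : L, x ≠ z → Cr z x x)
    {x y u v cc : L} (hx : Qrel Cr x cc u v) (hy : Qrel Cr y cc u v) :
    Qrel Cr x y u v := by
  have step : ∀ p : L, Cr u p cc → Cr cc u v → Cr p u v := by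
    intro p hp hcc
    rcases hC3 cc u v p hcc with h | h
    · have h1 : Cr u cc v := qaux_F4 hsym hC2 htrans hC3 hp h
      exact absurd (hsym _ _ _ hcc) (hC2 _ _ _ (hsym _ _ _ h1))
    · exact h
  rcases hx with ⟨hx1, hx2⟩ | ⟨hx1, hx2⟩ | ⟨hx1, hx2, hx3⟩ | ⟨hx1, hx2, hx3⟩ <;>
    rcases hy with ⟨hy1, hy2⟩ | ⟨hy1, hy2⟩ | ⟨hy1, hy2, hy3⟩ | ⟨hy1, hy2, hy3⟩
  · exact Or.inl ⟨htrans u x cc y hx1 (hsym _ _ _ hy1),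
      htrans v x cc y hx2 (hsym _ _ _ hy2)⟩
  · exact Or.inr (Or.inl ⟨step x hx1 hy2, hy1⟩)
  · subst hy1; exact Or.inl ⟨hx1, hx2⟩
  · exact Or.inr (Or.inr (Or.inr ⟨hy1, (qaux_ne hsym hC2 hC4 hx1).1, hy2⟩))
  · exact Or.inr (Or.inl ⟨hx1, step y hy1 hx2⟩)
  · exact Or.inr (Or.inl ⟨hx1, hy1⟩)
  · subst hy1; exact Or.inr (Or.inl ⟨hx1, hx2⟩)
  · exact Or.inr (Or.inr (Or.inr ⟨hy1, (qaux_ne hsym hC2 hC4 hx1).1.symm, hy2⟩))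
  · subst hx1; exact Or.inl ⟨hsym _ _ _ hy1, hsym _ _ _ hy2⟩
  · subst hx1; exact Or.inr (Or.inl ⟨hy2, hy1⟩)
  · exact Or.inr (Or.inr (Or.inl ⟨hx1.trans hy1.symm, hx2, hx3⟩))
  · subst hx1; exact Or.inr (Or.inr (Or.inr ⟨hy1, hy3, hy2⟩))
  · exact Or.inr (Or.inr (Or.inr ⟨hx1, hx2, (qaux_ne hsym hC2 hC4 hy1).1⟩))
  · exact Or.inr (Or.inr (Or.inr ⟨hx1, hx2, (qaux_ne hsym hC2 hC4 hy1).1.symm⟩))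
  · subst hy1; exact Or.inr (Or.inr (Or.inr ⟨hx1, hx2, hx3⟩))
  · exact Or.inr (Or.inr (Or.inr ⟨hx1, hx2, hy2⟩))

end QAux

/-- If `f` preserves the quartet relation `Q` on every 4-element subset of `X`
containing `c`, then `f` preserves `Q` on all of `X`. -/
theorem stmt12 {L : Type*} (Cr : L → L → L → Prop)
    (hsym : ∀ z x y : L, Cr z x y → Cr z y x)
    (hC2 : ∀ z x y : L, Cr z x y → ¬ Cr y x z)
    (htrans : ∀ z x y w : L, Cr z x y → Cr z y w → Cr z x w)
    (hC3 : ∀ z x y w : L, Cr z x y → (Cr z w y ∨ Cr w x y))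
    (hC4 : ∀ z x : L, x ≠ z → Cr z x x)
    (hC8 : ∀ u v w : L, u ≠ v → u ≠ w → v ≠ w → Cr w u v ∨ Cr v u w ∨ Cr u v w)
    (X : Set L) (c : L) (hc : c ∈ X) (f : L → L)
    (h4 : ∀ a ∈ X, ∀ b ∈ X, ∀ u ∈ X, ∀ v ∈ X,
      (c = a ∨ c = b ∨ c = u ∨ c = v) →
      Qrel Cr a b u v → Qrel Cr (f a) (f b) (f u) (f v)) :
    QPreservesOn Cr f X := by
  have ne := fun {z x y : L} (h : Cr z x y) => qaux_ne hsym hC2 hC4 h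
  have F3 := fun {z x y w : L} (h1 : Cr z x y) (h2 : Cr y x w) =>
    qaux_F3 hsym hC2 hC3 h1 h2
  have F4 := fun {z x y w : L} (h1 : Cr z x y) (h2 : Cr y x w) =>
    qaux_F4 hsym hC2 htrans hC3 h1 h2
  have M := fun {x y u v cc : L} (hx : Qrel Cr x cc u v) (hy : Qrel Cr y cc u v) =>
    qaux_M hsym hC2 htrans hC3 hC4 hx hy
  intro a ha b hb u hu v hv hq
  by_cases hca : c = a
  · exact h4 a ha b hb u hu v hv (Or.inl hca) hq
  by_cases hcb : c = b
  · exact h4 a ha b hb u hu v hv (Or.inr (Or.inl hcb)) hq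
  by_cases hcu : c = u
  · exact h4 a ha b hb u hu v hv (Or.inr (Or.inr (Or.inl hcu))) hq
  by_cases hcv : c = v
  · exact h4 a ha b hb u hu v hv (Or.inr (Or.inr (Or.inr hcv))) hq
  -- c is distinct from a, b, u, v
  have key_ne : ∀ p ∈ X, ∀ q ∈ X, p ≠ q → p ≠ c → f p ≠ f q := by
    intro p hp q hq hpq hpc
    have hQ : Qrel Cr p p q c := Or.inr (Or.inr (Or.inl ⟨rfl, hpq, hpc⟩))
    have := h4 p hp p hp q hq c hc (Or.inr (Or.inr (Or.inr rfl))) hQ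
    exact qaux_qne hsym hC2 hC4 this
  have K : ∀ p ∈ X, ∀ q ∈ X, ∀ r ∈ X, ∀ s ∈ X, p ≠ q → c ≠ p → c ≠ q →
      Cr r p q → Cr s p q → Qrel Cr (f p) (f q) (f r) (f s) := by
    intro p hp q hq r hr s hs hpq hcp hcq h1 h2
    by_cases hc1 : Cr c p q
    · have f1 := h4 p hp q hq r hr c hc (Or.inr (Or.inr (Or.inr rfl)))
        (Or.inl ⟨h1, hc1⟩)
      have f2 := h4 p hp q hq s hs c hc (Or.inr (Or.inr (Or.inr rfl)))
        (Or.inl ⟨h2, hc1⟩)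
      exact qaux_swap (M (qaux_swap f1) (qaux_swap f2))
    · rcases hC8 p q c hpq (Ne.symm hcp) (Ne.symm hcq) with h | h | h
      · exact absurd h hc1
      · -- h : Cr q p c
        have f1 := h4 p hp c hc r hr s hs (Or.inr (Or.inl rfl))
          (Or.inl ⟨F3 h1 h, F3 h2 h⟩)
        have f2 := h4 q hq c hc r hr s hs (Or.inr (Or.inl rfl))
          (Or.inl ⟨F4 h1 h, F4 h2 h⟩)
        exact M f1 f2
      · -- h : Cr p q c
        have f1 := h4 q hq c hc r hr s hs (Or.inr (Or.inl rfl))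
          (Or.inl ⟨F3 (hsym _ _ _ h1) h, F3 (hsym _ _ _ h2) h⟩)
        have f2 := h4 p hp c hc r hr s hs (Or.inr (Or.inl rfl))
          (Or.inl ⟨F4 (hsym _ _ _ h1) h, F4 (hsym _ _ _ h2) h⟩)
        exact M f2 f1
  rcases hq with ⟨h1, h2⟩ | ⟨h1, h2⟩ | ⟨h1, h2, h3⟩ | ⟨h1, h2, h3⟩
  · by_cases hab : a = b
    · subst hab
      exact Or.inr (Or.inr (Or.inl ⟨rfl,
        key_ne a ha u hu (ne h1).1.symm (Ne.symm hca),
        key_ne a ha v hv (ne h2).1.symm (Ne.symm hca)⟩))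
    · exact K a ha b hb u hu v hv hab hca hcb h1 h2
  · by_cases huv : u = v
    · subst huv
      exact Or.inr (Or.inr (Or.inr ⟨rfl,
        key_ne u hu a ha (ne h1).1.symm (Ne.symm hcu),
        key_ne u hu b hb (ne h2).1.symm (Ne.symm hcu)⟩))
    · exact qaux_swap (K u hu v hv a ha b hb huv hcu hcv h1 h2)
  · exact Or.inr (Or.inr (Or.inl ⟨congrArg f h1,
      key_ne a ha u hu h2 (Ne.symm hca), key_ne a ha v hv h3 (Ne.symm hca)⟩))
  · exact Or.inr (Or.inr (Or.inr ⟨congrArg f h1,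
      key_ne u hu a ha h2 (Ne.symm hcu), key_ne u hu b hb h3 (Ne.symm hcu)⟩))
end

section
/- If A ⊆ 𝕃 ∖ {c} and f : 𝕃 → 𝕃 behaves as rer_c on A, then f preserves the relation Q on A ∪ {c}. -/
/-- If `f` behaves as `rer_c` on `A ⊆ 𝕃 ∖ {c}`, then `f` preserves `Q` on `A ∪ {c}`. -/
theorem stmt13 {L : Type*} (Cr : L → L → L → Prop)
    (hsym : ∀ z x y : L, Cr z x y → Cr z y x)
    (hC2 : ∀ z x y : L, Cr z x y → ¬ Cr y x z)
    (htrans : ∀ z x y w : L, Cr z x y → Cr z y w → Cr z x w)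
    (hC3 : ∀ z x y w : L, Cr z x y → (Cr z w y ∨ Cr w x y))
    (hC4 : ∀ z x : L, x ≠ z → Cr z x x)
    (hC8 : ∀ u v w : L, u ≠ v → u ≠ w → v ≠ w → Cr w u v ∨ Cr v u w ∨ Cr u v w)
    (c : L) (A : Set L) (hA : A ⊆ {x : L | x ≠ c}) (f : L → L)
    (hrer : RerOn Cr f c A) :
    QPreservesOn Cr f (A ∪ {c}) := by

  obtain ⟨⟨k1, k2, k3⟩, k4⟩ := hrer
  -- basic consequences of the axioms
  have crne : ∀ z x y : L, Cr z x y → z ≠ x := by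
    intro z x y h he
    subst he
    by_cases hy : y = z
    · subst hy; exact hC2 _ _ _ h h
    · exact hC2 z z y h (hC4 y z fun e => hy e.symm)
  have crne' : ∀ z x y : L, Cr z x y → z ≠ y := fun z x y h => crne z y x (hsym _ _ _ h)
  have hself : ∀ x, x ∈ A → Cr c x x := fun x hx => hC4 c x (hA hx)
  have hcone1 : ∀ x ∈ A, ∀ y ∈ A, Cr c y x → Cr (f c) (f x) (f y) :=
    fun x hx y hy h => k1 x hx x ⟨hx, hself x hx⟩ y ⟨hy, h⟩
  have hcone2 : ∀ x ∈ A, ∀ y ∈ A, ∀ z ∈ A, Cr c y x → Cr c z x → Cr z x y →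
      Cr (f z) (f x) (f y) :=
    fun x hx y hy z hz hyc hzc h => k2 x hx x ⟨hx, hself x hx⟩ y ⟨hy, hyc⟩ z ⟨hz, hzc⟩ h
  have hsplit : ∀ x ∈ A, ∀ y ∈ A, ∀ w ∈ A, ¬ Cr c x y → Cr c w x → Cr (f y) (f x) (f w) := by
    intro x hx y hy w hw hxy hw'
    rcases k3 x hx y hy with heq | hs
    · exfalso
      have hyx : y ∈ cone Cr c x := by rw [heq]; exact hself y hy
      exact hxy (hsym _ _ _ hyx)
    · exact hs.1 (f x) ⟨x, ⟨hx, hself x hx⟩, rfl⟩ (f w) ⟨w, ⟨hw, hw'⟩, rfl⟩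
        (f y) ⟨y, ⟨hy, hself y hy⟩, rfl⟩
  have injf : ∀ x ∈ A ∪ {c}, ∀ y ∈ A ∪ {c}, x ≠ y → f x ≠ f y := by
    intro x hx y hy hne
    rcases hx with hx | hx <;> rcases hy with hy | hy
    · by_cases hc : Cr c x y
      · exact Ne.symm (crne _ _ _
          (hcone2 x hx x hx y hy (hself x hx) (hsym _ _ _ hc) (hC4 y x hne)))
      · exact Ne.symm (crne _ _ _ (hsplit x hx y hy x hx hc (hself x hx)))
    · rw [Set.mem_singleton_iff] at hy; subst hy
      exact Ne.symm (crne _ _ _ (hcone1 x hx x hx (hself x hx)))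
    · rw [Set.mem_singleton_iff] at hx; subst hx
      exact crne _ _ _ (hcone1 y hy y hy (hself y hy))
    · rw [Set.mem_singleton_iff] at hx hy
      exact absurd (hx.trans hy.symm) hne
  have auxA : ∀ a ∈ A, ∀ b ∈ A, Cr c a b → ∀ w ∈ A ∪ {c}, Cr w a b →
      Cr (f w) (f a) (f b) := by
    intro a ha b hb hE w hw hwab
    rcases hw with hw | hw
    · by_cases hc : Cr c a w
      · exact hcone2 a ha b hb w hw (hsym _ _ _ hE) (hsym _ _ _ hc) hwab
      · exact hsplit a ha w hw b hb hc (hsym _ _ _ hE)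
    · rw [Set.mem_singleton_iff] at hw; subst hw
      exact hcone1 a ha b hb (hsym _ _ _ hE)
  have auxB : ∀ b ∈ A, ∀ u ∈ A, ∀ v ∈ A, Cr u c b → Cr v c b →
      Cr (f c) (f u) (f v) ∧ Cr (f b) (f u) (f v) := by
    intro b hb u hu v hv hucb hvcb
    have hubc : Cr u b c := hsym _ _ _ hucb
    have hvbc : Cr v b c := hsym _ _ _ hvcb
    have hncub : ¬ Cr c u b := fun h => hC2 u b c hubc (hsym _ _ _ h)
    have hbu : u ≠ b := crne' u c b hucb
    have hbv : v ≠ b := crne' v c b hvcb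
    by_cases huv : u = v
    · subst huv
      exact ⟨hcone1 u hu u hu (hself u hu), hsplit u hu b hb u hu hncub (hself u hu)⟩
    · have hcu : u ≠ c := crne u c b hucb
      have hcv : v ≠ c := crne v c b hvcb
      rcases hC8 u v b huv hbu hbv with hb1 | hb2 | hb3
      · by_cases hcuv : Cr c u v
        · exact ⟨hcone1 u hu v hv (hsym _ _ _ hcuv), hsplit u hu b hb v hv hncub (hsym _ _ _ hcuv)⟩
        · exfalso
          rcases hC8 u v c huv hcu hcv with h | h | h
          · exact hcuv h
          · exact hC2 b u v hb1 (htrans v u c b h hvcb)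
          · exact hC2 b v u (hsym _ _ _ hb1) (htrans u v c b h hucb)
      · have hvuc : Cr v u c := htrans v u b c hb2 hvbc
        obtain ⟨g1, g2, g3, g4⟩ := k4 v hv u hu b hb ⟨hb2, hvuc, hvbc, hubc⟩
        exact ⟨hsym _ _ _ g1, hsym _ _ _ g4⟩
      · have huvc : Cr u v c := htrans u v b c hb3 hubc
        obtain ⟨g1, g2, g3, g4⟩ := k4 u hu v hv b hb ⟨hb3, huvc, hubc, hvbc⟩
        exact ⟨g1, g4⟩
  have main : ∀ a ∈ A ∪ {c}, ∀ b ∈ A ∪ {c}, ∀ u ∈ A ∪ {c}, ∀ v ∈ A ∪ {c},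
      Cr u a b → Cr v a b → Qrel Cr (f a) (f b) (f u) (f v) := by
    intro a ha b hb u hu v hv hq1 hq2
    rcases ha with ha | ha
    · rcases hb with hb | hb
      · by_cases hE : Cr c a b
        · exact Or.inl ⟨auxA a ha b hb hE u hu hq1, auxA a ha b hb hE v hv hq2⟩
        · have huA : u ∈ A := by
            rcases hu with h | h
            · exact h
            · rw [Set.mem_singleton_iff] at h; exact absurd (h ▸ hq1) hE
          have hvA : v ∈ A := by
            rcases hv with h | h
            · exact h
            · rw [Set.mem_singleton_iff] at h; exact absurd (h ▸ hq2) hE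
          have hucb : Cr u c b := (hC3 u a b c hq1).resolve_right hE
          have huca : Cr u c a := (hC3 u b a c (hsym _ _ _ hq1)).resolve_right
            (fun h => hE (hsym _ _ _ h))
          have hvcb : Cr v c b := (hC3 v a b c hq2).resolve_right hE
          have hvca : Cr v c a := (hC3 v b a c (hsym _ _ _ hq2)).resolve_right
            (fun h => hE (hsym _ _ _ h))
          exact Or.inr (Or.inl ⟨(auxB a ha u huA v hvA huca hvca).2,
            (auxB b hb u huA v hvA hucb hvcb).2⟩)
      · rw [Set.mem_singleton_iff] at hb; rw [hb] at hq1 hq2 ⊢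
        have huA : u ∈ A := by
          rcases hu with h | h
          · exact h
          · rw [Set.mem_singleton_iff] at h; exact absurd h (crne' u a c hq1)
        have hvA : v ∈ A := by
          rcases hv with h | h
          · exact h
          · rw [Set.mem_singleton_iff] at h; exact absurd h (crne' v a c hq2)
        obtain ⟨g1, g2⟩ := auxB a ha u huA v hvA (hsym _ _ _ hq1) (hsym _ _ _ hq2)
        exact Or.inr (Or.inl ⟨g2, g1⟩)
    · rw [Set.mem_singleton_iff] at ha; rw [ha] at hq1 hq2 ⊢
      rcases hb with hb | hb
      · have huA : u ∈ A := by
          rcases hu with h | h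
          · exact h
          · rw [Set.mem_singleton_iff] at h; exact absurd h.symm (crne u c b hq1).symm
        have hvA : v ∈ A := by
          rcases hv with h | h
          · exact h
          · rw [Set.mem_singleton_iff] at h; exact absurd h.symm (crne v c b hq2).symm
        obtain ⟨g1, g2⟩ := auxB b hb u huA v hvA hq1 hq2
        exact Or.inr (Or.inl ⟨g1, g2⟩)
      · rw [Set.mem_singleton_iff] at hb; rw [hb] at hq1 hq2 ⊢
        have huA : u ∈ A := by
          rcases hu with h | h
          · exact h
          · rw [Set.mem_singleton_iff] at h; exact absurd h.symm (crne u c c hq1).symm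
        have hvA : v ∈ A := by
          rcases hv with h | h
          · exact h
          · rw [Set.mem_singleton_iff] at h; exact absurd h.symm (crne v c c hq2).symm
        refine Or.inl ⟨hC4 _ _ ?_, hC4 _ _ ?_⟩
        · exact injf c (Or.inr rfl) u (Or.inl huA) (Ne.symm (crne u c c hq1))
        · exact injf c (Or.inr rfl) v (Or.inl hvA) (Ne.symm (crne v c c hq2))
  intro a ha b hb u hu v hv hQ
  rcases hQ with ⟨q1, q2⟩ | ⟨q1, q2⟩ | ⟨q1, q2, q3⟩ | ⟨q1, q2, q3⟩
  · exact main a ha b hb u hu v hv q1 q2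
  · rcases main u hu v hv a ha b hb q1 q2 with ⟨g1, g2⟩ | ⟨g1, g2⟩ | ⟨g1, g2, g3⟩ | ⟨g1, g2, g3⟩
    · exact Or.inr (Or.inl ⟨g1, g2⟩)
    · exact Or.inl ⟨g1, g2⟩
    · exact Or.inr (Or.inr (Or.inr ⟨g1, g2, g3⟩))
    · exact Or.inr (Or.inr (Or.inl ⟨g1, g2, g3⟩))
  · subst q1
    exact Or.inr (Or.inr (Or.inl ⟨rfl, injf a ha u hu q2, injf a ha v hv q3⟩))
  · subst q1
    exact Or.inr (Or.inr (Or.inr ⟨rfl, injf u hu a ha q2, injf u hu b hb q3⟩))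
end

section
/- Let X ⊆ 𝕃, a ∈ X, and let f : 𝕃 → 𝕃 preserve Q on X with f(a)|f(X ∖ {a}). Then: (i) f preserves C on X ∩ S^a_x for every x ∈ X ∖ {a}; and (ii) for any x, y ∈ X ∖ {a}, either S^a_x = S^a_y or f(X ∩ S^a_x)|f(X ∩ S^a_y). -/
/-- If `f` preserves `Q` on `X` and `f(a)|f(X ∖ {a})`, then (i) `f` preserves `C` on
`X ∩ S^a_x` for every `x ∈ X ∖ {a}`, and (ii) images of distinct cones split. -/
theorem stmt14 {L : Type*} (Cr : L → L → L → Prop)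
    (hsym : ∀ z x y : L, Cr z x y → Cr z y x)
    (hC2 : ∀ z x y : L, Cr z x y → ¬ Cr y x z)
    (htrans : ∀ z x y w : L, Cr z x y → Cr z y w → Cr z x w)
    (hC3 : ∀ z x y w : L, Cr z x y → (Cr z w y ∨ Cr w x y))
    (hC4 : ∀ z x : L, x ≠ z → Cr z x x)
    (hC8 : ∀ u v w : L, u ≠ v → u ≠ w → v ≠ w → Cr w u v ∨ Cr v u w ∨ Cr u v w)
    (X : Set L) (a : L) (ha : a ∈ X) (f : L → L)
    (hQ : QPreservesOn Cr f X)
    (hsplit : ∀ s ∈ X \ {a}, ∀ t ∈ X \ {a}, Cr (f a) (f s) (f t)) :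
    (∀ x ∈ X \ {a}, ∀ u ∈ X ∩ cone Cr a x, ∀ v ∈ X ∩ cone Cr a x,
      ∀ w ∈ X ∩ cone Cr a x, Cr w u v → Cr (f w) (f u) (f v)) ∧
    (∀ x ∈ X \ {a}, ∀ y ∈ X \ {a}, cone Cr a x = cone Cr a y ∨
      splitsSet Cr (f '' (X ∩ cone Cr a x)) (f '' (X ∩ cone Cr a y))) := by
  -- members of a cone at `a` (with apex x ≠ a) are ≠ a
  have hne : ∀ x : L, x ≠ a → ∀ u : L, Cr a u x → u ≠ a := by
    intro x hx u hu hua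
    rw [hua] at hu
    exact hC2 a a x hu (hC4 x a (Ne.symm hx))
  -- key transfer lemma
  have key : ∀ u ∈ X \ {a}, ∀ v ∈ X \ {a}, ∀ s ∈ X \ {a},
      Cr s u v → Cr a u v → Cr (f s) (f u) (f v) := by
    intro u hu v hv s hs h1 h2
    have hq : Qrel Cr u v s a := Or.inl ⟨h1, h2⟩
    have hq' := hQ u hu.1 v hv.1 s hs.1 a ha hq
    rcases hq' with ⟨h, _⟩ | ⟨h, _⟩ | ⟨h, h2', _⟩ | ⟨h, h2', _⟩
    · exact h
    · exact absurd (hsym _ _ _ (hsplit u hu s hs)) (hC2 _ _ _ h)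
    · rw [← h]; exact hC4 _ _ h2'
    · rw [h]; exact hsplit u hu v hv
  have coneXa : ∀ x ∈ X \ {a}, ∀ u ∈ X ∩ cone Cr a x, u ∈ X \ {a} := by
    intro x hx u hu
    exact ⟨hu.1, hne x hx.2 u hu.2⟩
  have conepair : ∀ x u v : L, u ∈ cone Cr a x → v ∈ cone Cr a x → Cr a u v := by
    intro x u v hu hv
    exact htrans a u x v hu (hsym _ _ _ hv)
  -- if cones at x and y are not E_a-related, elements of one split off elements of other
  have cross : ∀ x y : L, ¬ Cr a x y → ∀ u v s : L,
      u ∈ cone Cr a x → v ∈ cone Cr a x → s ∈ cone Cr a y → Cr s u v := by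
    intro x y hxy u v s hu hv hs
    have huv : Cr a u v := conepair x u v hu hv
    rcases hC3 a u v s huv with h | h
    · exact absurd (htrans a x s y (hsym _ _ _ (htrans a s v x h hv)) hs) hxy
    · exact h
  constructor
  · intro x hx u hu v hv w hw huv
    exact key u (coneXa x hx u hu) v (coneXa x hx v hv) w (coneXa x hx w hw)
      huv (conepair x u v hu.2 hv.2)
  · intro x hx y hy
    by_cases hxy : Cr a x y
    · left
      ext p
      constructor
      · intro hp; exact htrans a p x y hp hxy
      · intro hp; exact htrans a p y x hp (hsym _ _ _ hxy)
    · right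
      have hyx : ¬ Cr a y x := fun h => hxy (hsym _ _ _ h)
      constructor
      · rintro _ ⟨u, hu, rfl⟩ _ ⟨v, hv, rfl⟩ _ ⟨s, hs, rfl⟩
        exact key u (coneXa x hx u hu) v (coneXa x hx v hv) s (coneXa y hy s hs)
          (cross x y hxy u v s hu.2 hv.2 hs.2) (conepair x u v hu.2 hv.2)
      · rintro _ ⟨u, hu, rfl⟩ _ ⟨v, hv, rfl⟩ _ ⟨s, hs, rfl⟩
        exact key u (coneXa y hy u hu) v (coneXa y hy v hv) s (coneXa x hx s hs)
          (cross y x hyx u v s hu.2 hv.2 hs.2) (conepair y u v hu.2 hv.2)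
end

section
/- Characterization of rer: Let X ⊆ 𝕃, a ∈ X, and f : 𝕃 → 𝕃 with f(a)|f(X ∖ {a}). Then f behaves as rer_a on X if and only if f preserves Q on X. -/
/-- Characterization of `rer`: if `f(a)|f(X ∖ {a})`, then `f` behaves as `rer_a` on
`X ∖ {a}` if and only if `f` preserves `Q` on `X`. -/
theorem stmt15 {L : Type*} (Cr : L → L → L → Prop)
    (hsym : ∀ z x y : L, Cr z x y → Cr z y x)
    (hC2 : ∀ z x y : L, Cr z x y → ¬ Cr y x z)
    (htrans : ∀ z x y w : L, Cr z x y → Cr z y w → Cr z x w)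
    (hC3 : ∀ z x y w : L, Cr z x y → (Cr z w y ∨ Cr w x y))
    (hC4 : ∀ z x : L, x ≠ z → Cr z x x)
    (hC8 : ∀ u v w : L, u ≠ v → u ≠ w → v ≠ w → Cr w u v ∨ Cr v u w ∨ Cr u v w)
    (X : Set L) (a : L) (ha : a ∈ X) (f : L → L)
    (hsplit : ∀ s ∈ X \ {a}, ∀ t ∈ X \ {a}, Cr (f a) (f s) (f t)) :
    RerOn Cr f a (X \ {a}) ↔ QPreservesOn Cr f X := by

  classical
  have hirr : ∀ x y : L, ¬ Cr x x y := by
    intro x y h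
    by_cases hxy : x = y
    · subst hxy; exact hC2 x x x h h
    · exact hC2 x x y h (hC4 y x hxy)
  have hirr2 : ∀ x y : L, ¬ Cr x y x := fun x y h => hirr x y (hsym _ _ _ h)
  have hne1 : ∀ z x y : L, Cr z x y → z ≠ x := by
    rintro z x y h rfl; exact hirr _ _ h
  have hne2 : ∀ z x y : L, Cr z x y → z ≠ y := by
    rintro z x y h rfl; exact hirr2 _ _ h
  have excl : ∀ z x y : L, Cr z x y → ¬ Cr x z y := by
    intro z x y h h2
    exact hC2 z y x (hsym _ _ _ h) (hsym _ _ _ h2)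
  have hmemA : ∀ x : L, x ∈ X \ {a} → x ≠ a := by
    intro x hx e; exact hx.2 (by simp [e])
  have hmkA : ∀ x : L, x ∈ X → x ≠ a → x ∈ X \ {a} := by
    intro x hx hxa; exact ⟨hx, by simp [hxa]⟩
  constructor
  · rintro ⟨⟨h1, h2, h3⟩, h4⟩
    -- injectivity on X
    have hinj : ∀ p ∈ X, ∀ q ∈ X, p ≠ q → f p ≠ f q := by
      intro p hp q hq hpq
      by_cases hpa : p = a
      · subst hpa
        have hqA := hmkA q hq (fun e => hpq e.symm)
        have := hsplit q hqA q hqA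
        intro e; rw [e] at this; exact hirr _ _ this
      by_cases hqa : q = a
      · subst hqa
        have hpA := hmkA p hp hpa
        have := hsplit p hpA p hpA
        intro e; rw [← e] at this; exact hirr _ _ this
      have hpA : p ∈ X \ {a} := hmkA p hp hpa
      have hqA : q ∈ X \ {a} := hmkA q hq hqa
      by_cases hE : Cr a p q
      · have := h2 p hpA p ⟨hpA, hC4 a p hpa⟩ p ⟨hpA, hC4 a p hpa⟩ q
          ⟨hqA, hsym _ _ _ hE⟩ (hC4 q p hpq)
        intro e; rw [e] at this; exact hirr _ _ this
      · rcases h3 p hpA q hqA with hcone | hsp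
        · exfalso
          have hq' : q ∈ cone Cr a q := hC4 a q hqa
          rw [← hcone] at hq'
          exact hE (hsym _ _ _ hq')
        · have := hsp.1 (f p) ⟨p, ⟨hpA, hC4 a p hpa⟩, rfl⟩ (f p)
            ⟨p, ⟨hpA, hC4 a p hpa⟩, rfl⟩ (f q) ⟨q, ⟨hqA, hC4 a q hqa⟩, rfl⟩
          intro e; rw [e] at this; exact hirr _ _ this
    -- keyA : within-cone / cross-cone preservation
    have keyA : ∀ s t w : L, s ∈ X \ {a} → t ∈ X \ {a} → w ∈ X \ {a} →
        Cr a s t → Cr w s t → Cr (f w) (f s) (f t) := by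
      intro s t w hsA htA hwA hast hwst
      by_cases hws : Cr a w s
      · exact h2 s hsA s ⟨hsA, hC4 a s (hmemA s hsA)⟩ t ⟨htA, hsym _ _ _ hast⟩ w
          ⟨hwA, hws⟩ hwst
      · rcases h3 s hsA w hwA with hcone | hsp
        · exfalso
          have hw' : w ∈ cone Cr a w := hC4 a w (hmemA w hwA)
          rw [← hcone] at hw'
          exact hws hw'
        · exact hsp.1 (f s) ⟨s, ⟨hsA, hC4 a s (hmemA s hsA)⟩, rfl⟩ (f t)
            ⟨t, ⟨htA, hsym _ _ _ hast⟩, rfl⟩ (f w)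
            ⟨w, ⟨hwA, hC4 a w (hmemA w hwA)⟩, rfl⟩
    have keyB : ∀ t u v : L, t ∈ X \ {a} → u ∈ X \ {a} → v ∈ X \ {a} → u ≠ v →
        Cr u a t → Cr v a t → Cr (f t) (f u) (f v) := by
      intro t u v htA huA hvA huv hu hv
      have hnut : ¬ Cr a u t := excl u a t hu
      rcases hC8 u v a huv (hmemA u huA) (hmemA v hvA) with h | h | h
      · rcases h3 u huA t htA with hcone | hsp
        · exfalso
          have ht' : t ∈ cone Cr a t := hC4 a t (hmemA t htA)
          rw [← hcone] at ht'
          exact hnut (hsym _ _ _ ht')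
        · exact hsp.1 (f u) ⟨u, ⟨huA, hC4 a u (hmemA u huA)⟩, rfl⟩ (f v)
            ⟨v, ⟨hvA, hsym _ _ _ h⟩, rfl⟩ (f t)
            ⟨t, ⟨htA, hC4 a t (hmemA t htA)⟩, rfl⟩
      · have hvt : Cr v u t := htrans v u a t h hv
        have := h4 v hvA u huA t htA ⟨hvt, h, hsym _ _ _ hv, hsym _ _ _ hu⟩
        exact hsym _ _ _ this.2.2.2
      · have hut : Cr u v t := htrans u v a t h hu
        have := h4 u huA v hvA t htA ⟨hut, h, hsym _ _ _ hu, hsym _ _ _ hv⟩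
        exact this.2.2.2
    -- main lemma: preservation of the split st:uv
    have hmain : ∀ s t u v : L, s ∈ X → t ∈ X → u ∈ X → v ∈ X →
        Cr u s t → Cr v s t → Qrel Cr (f s) (f t) (f u) (f v) := by
      intro s t u v hs ht hu hv hu' hv'
      have hus : u ≠ s := hne1 _ _ _ hu'
      have hut : u ≠ t := hne2 _ _ _ hu'
      have hvs : v ≠ s := hne1 _ _ _ hv'
      have hvt : v ≠ t := hne2 _ _ _ hv'
      by_cases hst : s = t
      · exact Or.inr (Or.inr (Or.inl ⟨by rw [hst], hinj s hs u hu hus.symm,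
          hinj s hs v hv hvs.symm⟩))
      by_cases huv : u = v
      · exact Or.inr (Or.inr (Or.inr ⟨by rw [huv], hinj u hu s hs hus,
          hinj u hu t ht hut⟩))
      by_cases hua : u = a
      · subst hua
        have hsA := hmkA s hs (fun e => hus (e.symm))
        have htA := hmkA t ht (fun e => hut (e.symm))
        have hvA := hmkA v hv (fun e => huv e.symm)
        exact Or.inl ⟨hsplit s hsA t htA, keyA s t v hsA htA hvA hu' hv'⟩
      by_cases hva : v = a
      · subst hva
        have hsA := hmkA s hs (fun e => hvs (e.symm))
        have htA := hmkA t ht (fun e => hvt (e.symm))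
        have huA := hmkA u hu huv
        exact Or.inl ⟨keyA s t u hsA htA huA hv' hu', hsplit s hsA t htA⟩
      have huA := hmkA u hu hua
      have hvA := hmkA v hv hva
      by_cases hsa : s = a
      · subst hsa
        have htA := hmkA t ht (fun e => hst e.symm)
        exact Or.inr (Or.inl ⟨hsplit u huA v hvA, keyB t u v htA huA hvA huv hu' hv'⟩)
      by_cases hta : t = a
      · subst hta
        have hsA := hmkA s hs hst
        exact Or.inr (Or.inl ⟨keyB s u v hsA huA hvA huv (hsym _ _ _ hu')
          (hsym _ _ _ hv'), hsplit u huA v hvA⟩)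
      have hsA := hmkA s hs hsa
      have htA := hmkA t ht hta
      by_cases hE : Cr a s t
      · exact Or.inl ⟨keyA s t u hsA htA huA hE hu', keyA s t v hsA htA hvA hE hv'⟩
      · have c1 : Cr u a t := (hC3 u s t a hu').resolve_right hE
        have c2 : Cr u a s := (hC3 u t s a (hsym _ _ _ hu')).resolve_right
          (fun h => hE (hsym _ _ _ h))
        have c3 : Cr v a t := (hC3 v s t a hv').resolve_right hE
        have c4 : Cr v a s := (hC3 v t s a (hsym _ _ _ hv')).resolve_right
          (fun h => hE (hsym _ _ _ h))
        exact Or.inr (Or.inl ⟨keyB s u v hsA huA hvA huv c2 c4,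
          keyB t u v htA huA hvA huv c1 c3⟩)
    intro s hs t ht u hu v hv hq
    rcases hq with ⟨q1, q2⟩ | ⟨q1, q2⟩ | ⟨e, n1, n2⟩ | ⟨e, n1, n2⟩
    · exact hmain s t u v hs ht hu hv q1 q2
    · rcases hmain u v s t hu hv hs ht q1 q2 with h | h | h | h
      · exact Or.inr (Or.inl h)
      · exact Or.inl h
      · exact Or.inr (Or.inr (Or.inr h))
      · exact Or.inr (Or.inr (Or.inl h))
    · exact Or.inr (Or.inr (Or.inl ⟨by rw [e], hinj s hs u hu n1, hinj s hs v hv n2⟩))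
    · exact Or.inr (Or.inr (Or.inr ⟨by rw [e], hinj u hu s hs n1, hinj u hu t ht n2⟩))
  · intro hQ
    refine ⟨⟨?_, ?_, ?_⟩, ?_⟩
    · intro b hb x hx y hy
      exact hsplit x hx.1 y hy.1
    · intro b hb x hx y hy z hz hzxy
      have haxy : Cr a x y := htrans a x b y hx.2 (hsym _ _ _ hy.2)
      rcases hQ x hx.1.1 y hy.1.1 z hz.1.1 a ha (Or.inl ⟨hzxy, haxy⟩) with
        ⟨h, _⟩ | ⟨h, _⟩ | ⟨e1, e2, _⟩ | ⟨e1, e2, _⟩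
      · exact h
      · exact absurd h (hC2 _ _ _ (hsplit z hz.1 x hx.1))
      · rw [← e1]; exact hC4 _ _ e2
      · rw [e1]; exact hsplit x hx.1 y hy.1
    · intro b hb c hc
      have key3 : ∀ b c : L, ¬ Cr a b c →
          ∀ u ∈ (X \ {a}) ∩ cone Cr a b, ∀ u' ∈ (X \ {a}) ∩ cone Cr a b,
          ∀ w ∈ (X \ {a}) ∩ cone Cr a c, Cr (f w) (f u) (f u') := by
        intro b c hbc u hu u' hu' w hw
        have huu' : Cr a u u' := htrans a u b u' hu.2 (hsym _ _ _ hu'.2)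
        have hnuw : ¬ Cr a u w := fun h =>
          hbc (htrans a b w c (htrans a b u w (hsym _ _ _ hu.2) h) hw.2)
        have hcr : Cr w u u' := by
          rcases hC3 a u u' w huu' with h | h
          · exact absurd (htrans a u u' w huu' (hsym _ _ _ h)) hnuw
          · exact h
        rcases hQ u hu.1.1 u' hu'.1.1 w hw.1.1 a ha (Or.inl ⟨hcr, huu'⟩) with
          ⟨h, _⟩ | ⟨h, _⟩ | ⟨e1, e2, _⟩ | ⟨e1, e2, _⟩
        · exact h
        · exact absurd h (hC2 _ _ _ (hsplit w hw.1 u hu.1))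
        · rw [← e1]; exact hC4 _ _ e2
        · rw [e1]; exact hsplit u hu.1 u' hu'.1
      by_cases hbc : Cr a b c
      · left
        ext x
        simp only [cone, Set.mem_setOf_eq]
        constructor
        · intro h; exact htrans a x b c h hbc
        · intro h; exact htrans a x c b h (hsym _ _ _ hbc)
      · right
        constructor
        · rintro p₁ ⟨u, hu, rfl⟩ p₂ ⟨u', hu', rfl⟩ q ⟨w, hw, rfl⟩
          exact key3 b c hbc u hu u' hu' w hw
        · rintro q₁ ⟨u, hu, rfl⟩ q₂ ⟨u', hu', rfl⟩ p ⟨w, hw, rfl⟩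
          exact key3 c b (fun h => hbc (hsym _ _ _ h)) u hu u' hu' w hw
    · intro x hx y hy z hz hxyz
      obtain ⟨h1, h2, h3, h4⟩ := hxyz
      refine ⟨hsplit x hx y hy, hsplit x hx z hz, hsplit y hy z hz, ?_⟩
      rcases hQ x hx.1 y hy.1 z hz.1 a ha (Or.inr (Or.inl ⟨h3, h4⟩)) with
        ⟨h, _⟩ | ⟨h, _⟩ | ⟨e1, e2, _⟩ | ⟨e1, e2, _⟩
      · exact h
      · exact absurd h (hC2 _ _ _ (hsplit z hz x hx))
      · rw [← e1]; exact hC4 _ _ e2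
      · rw [e1]; exact hsplit x hx y hy
end

section
/- If f : 𝕃 → 𝕃 behaves as tilde-rer_c on a c-universal set A (i.e., f satisfies conditions (1)–(3) of the cone conditions at c and additionally for all x, y ∈ A with x|yc one has f(y)|f(x)f(c)), then f preserves Q on A. -/
/-- If `f` behaves as `tilde-rer_c` on a `c`-universal set `A`, then `f` preserves `Q`
on `A`. -/
theorem stmt16 {L : Type*} (Cr : L → L → L → Prop)
    (hsym : ∀ z x y : L, Cr z x y → Cr z y x)
    (hC2 : ∀ z x y : L, Cr z x y → ¬ Cr y x z)
    (htrans : ∀ z x y w : L, Cr z x y → Cr z y w → Cr z x w)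
    (hC3 : ∀ z x y w : L, Cr z x y → (Cr z w y ∨ Cr w x y))
    (hC4 : ∀ z x : L, x ≠ z → Cr z x x)
    (hC8 : ∀ u v w : L, u ≠ v → u ≠ w → v ≠ w → Cr w u v ∨ Cr v u w ∨ Cr u v w)
    (c : L) (A : Set L) (hA : A ⊆ {x : L | x ≠ c})
    (huniv : cUniversal Cr c A) (f : L → L)
    (htrer : TildeRerOn Cr f c A) :
    QPreservesOn Cr f A := by
  obtain ⟨⟨h1, h2, h3⟩, h4⟩ := htrer
  -- Cr z x y implies z ≠ x
  have hne : ∀ z x y : L, Cr z x y → z ≠ x := by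
    intro z x y h hzx
    subst hzx
    by_cases hxy : z = y
    · subst hxy; exact hC2 z z z h h
    · exact hC2 z z y h (hC4 y z hxy)
  -- f is injective on A
  have finj : ∀ x ∈ A, ∀ y ∈ A, x ≠ y → f x ≠ f y := by
    intro x hx y hy hxy
    rcases hC8 x y c hxy (hA hx) (hA hy) with h | h | h
    · have hxK : x ∈ A ∩ cone Cr c x := ⟨hx, hC4 c x (hA hx)⟩
      have hyK : y ∈ A ∩ cone Cr c x := ⟨hy, hsym c x y h⟩
      have := h2 x hx x hxK x hxK y hyK (hC4 y x hxy)
      exact (hne _ _ _ this).symm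
    · exact hne _ _ _ (h4 y hy x hx h)
    · exact (hne _ _ _ (h4 x hx y hy h)).symm
  -- main lemma: images of a quartet ab|u, ab|v
  have key : ∀ a ∈ A, ∀ b ∈ A, ∀ u ∈ A, ∀ v ∈ A, Cr u a b → Cr v a b →
      Qrel Cr (f a) (f b) (f u) (f v) := by
    intro a ha b hb u hu v hv hu' hv'
    by_cases hc : Cr c a b
    · left
      have main : ∀ w ∈ A, Cr w a b → Cr (f w) (f a) (f b) := by
        intro w hw hw'
        by_cases hwc : Cr c w a
        · exact h2 a ha a ⟨ha, hC4 c a (hA ha)⟩ b ⟨hb, hsym c a b hc⟩ w ⟨hw, hwc⟩ hw'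
        · rcases h3 a ha w hw with hEq | hsplit
          · exact absurd (show w ∈ cone Cr c a from hEq ▸ (hC4 c w (hA hw))) hwc
          · exact hsplit.1 (f a) ⟨a, ⟨ha, hC4 c a (hA ha)⟩, rfl⟩
              (f b) ⟨b, ⟨hb, hsym c a b hc⟩, rfl⟩
              (f w) ⟨w, ⟨hw, hC4 c w (hA hw)⟩, rfl⟩
      exact ⟨main u hu hu', main v hv hv'⟩
    · right; left
      have hubc : Cr u b c := hsym u c b ((hC3 u a b c hu').resolve_right hc)
      have huac : Cr u a c := htrans u a b c hu' hubc
      have hvbc : Cr v b c := hsym v c b ((hC3 v a b c hv').resolve_right hc)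
      have hvac : Cr v a c := htrans v a b c hv' hvbc
      have ha1 := h4 u hu a ha huac
      have ha2 := h4 v hv a ha hvac
      have hb1 := h4 u hu b hb hubc
      have hb2 := h4 v hv b hb hvbc
      exact ⟨htrans _ _ _ _ ha1 (hsym _ _ _ ha2), htrans _ _ _ _ hb1 (hsym _ _ _ hb2)⟩
  intro a ha b hb u hu v hv hq
  rcases hq with ⟨hq1, hq2⟩ | ⟨hq1, hq2⟩ | ⟨hab, hau, hav⟩ | ⟨huv, hua, hub⟩
  · exact key a ha b hb u hu v hv hq1 hq2
  · have := key u hu v hv a ha b hb hq1 hq2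
    unfold Qrel at this ⊢
    tauto
  · exact Or.inr (Or.inr (Or.inl
      ⟨congrArg f hab, finj a ha u hu hau, finj a ha v hv hav⟩))
  · exact Or.inr (Or.inr (Or.inr
      ⟨congrArg f huv, finj u hu a ha hua, finj u hu b hb hub⟩))
end

section
/- Structure on the image of nil: Let D = nil(𝕃) where nil is an order-preserving function with behavior nil. Then for x, y, z ∈ D, the relation C(x; y, z) (i.e., yz|x) holds if and only if (y ≺ z ≺ x) ∨ (z ≺ y ≺ x) ∨ (y = z ∧ x ≠ y). Consequently, the structure induced on D by (𝕃; C) is first-order definable in the linear order (D; ≺), and (D; ≺) is isomorphic to (ℚ; <). -/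
/-- Structure on the image of nil: on `D = nil(𝕃)` the C-relation degenerates:
yz|x holds iff (y ≺ z ≺ x) ∨ (z ≺ y ≺ x) ∨ (y = z ∧ x ≠ y); consequently the induced
structure is definable in the linear order (D;≺), which is isomorphic to (ℚ;<).
`Cr x y z` denotes C(x;y,z), i.e. yz|x. -/
theorem stmt19 {L : Type*} [LinearOrder L]
    (hiso : Nonempty (L ≃o ℚ))
    (Cr : L → L → L → Prop)
    (hsym : ∀ z x y : L, Cr z x y → Cr z y x)
    (hC2 : ∀ z x y : L, Cr z x y → ¬ Cr y x z)
    (hC4 : ∀ z x : L, x ≠ z → Cr z x x)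
    (hC5 : ∀ z x : L, ¬ Cr z x z)
    (hC5' : ∀ x y : L, ¬ Cr x x y)
    (htrans : ∀ z x y w : L, Cr z x y → Cr z y w → Cr z x w)
    (hconv : ∀ x y z : L, Cr z x y → x < y → ¬ (x < z ∧ z < y))
    (nil : L → L)
    (hnilmono : StrictMono nil)
    (hnil : ∀ x y z : L, x < y → y < z → Cr (nil z) (nil x) (nil y)) :
    (∀ x ∈ Set.range nil, ∀ y ∈ Set.range nil, ∀ z ∈ Set.range nil,
      (Cr x y z ↔ ((y < z ∧ z < x) ∨ (z < y ∧ y < x) ∨ (y = z ∧ x ≠ y)))) ∧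
    Nonempty ({d : L // d ∈ Set.range nil} ≃o ℚ) := by
  -- key: if x,y,z ∈ range nil, Cr x y z and y < z, then z < x
  have key : ∀ x y z : L, x ∈ Set.range nil → y ∈ Set.range nil → z ∈ Set.range nil →
      Cr x y z → y < z → z < x := by
    rintro x y z ⟨a, rfl⟩ ⟨b, rfl⟩ ⟨c, rfl⟩ hcr hyz
    by_contra hle
    push_neg at hle
    rcases hle.lt_or_eq with hxz | hxz
    · -- x < z
      rcases lt_trichotomy (nil a) (nil b) with hxy | hxy | hxy
      · -- x < y < z, so a < b < c, hnil gives Cr z x y; hC2 on Cr x y z gives ¬ Cr z y x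
        have hab : a < b := hnilmono.lt_iff_lt.mp hxy
        have hbc : b < c := hnilmono.lt_iff_lt.mp hyz
        exact hC2 _ _ _ hcr (hsym _ _ _ (hnil a b c hab hbc))
      · exact hC5' _ _ (hxy ▸ hcr)
      · -- y < x < z contradicts convexity
        exact hconv _ _ _ hcr hyz ⟨hxy, hxz⟩
    · exact hC5 _ _ (hxz ▸ hcr)
  refine ⟨?_, ⟨((StrictMono.orderIso nil hnilmono).symm.trans hiso.some)⟩⟩
  rintro x hx y hy z hz
  constructor
  · intro hcr
    rcases lt_trichotomy y z with hyz | hyz | hyz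
    · exact Or.inl ⟨hyz, key x y z hx hy hz hcr hyz⟩
    · refine Or.inr (Or.inr ⟨hyz, ?_⟩)
      rintro rfl
      exact hC5' _ _ (hyz ▸ hcr)
    · exact Or.inr (Or.inl ⟨hyz, key x z y hx hz hy (hsym _ _ _ hcr) hyz⟩)
  · rintro (⟨h1, h2⟩ | ⟨h1, h2⟩ | ⟨rfl, h2⟩)
    · obtain ⟨a, rfl⟩ := hx; obtain ⟨b, rfl⟩ := hy; obtain ⟨c, rfl⟩ := hz
      exact hnil b c a (hnilmono.lt_iff_lt.mp h1) (hnilmono.lt_iff_lt.mp h2)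
    · obtain ⟨a, rfl⟩ := hx; obtain ⟨b, rfl⟩ := hy; obtain ⟨c, rfl⟩ := hz
      exact hsym _ _ _ (hnil c b a (hnilmono.lt_iff_lt.mp h1) (hnilmono.lt_iff_lt.mp h2))
    · exact hC4 _ _ (Ne.symm h2)
end
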